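/- Let X be a compact metric space and f : X → X a homeomorphism that is non-wandering (i.e., for every nonempty open set U there exists n ≥ 1 with f^n(U) ∩ U ≠ ∅). Then the set of recurrent points of f (points x such that f^{n_k}(x) → x for some sequence n_k → ∞) is dense in X. -/
import Mathlib


open Filter Topology Metric Set

/-- Return times to an open set are unbounded for a non-wandering map. -/
lemma returns_ge {X : Type*} [MetricSpace X] (f : X ≃ₜ X)
    (hnw : ∀ U : Set X, IsOpen U → U.Nonempty →
      ∃ n : ℕ, 1 ≤ n ∧ ((⇑f)^[n] '' U ∩ U).Nonempty) :
    ∀ (k : ℕ) (U : Set X), IsOpen U → U.Nonempty →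
      ∃ n : ℕ, k ≤ n ∧ 1 ≤ n ∧ ((⇑f)^[n] '' U ∩ U).Nonempty := by
  intro k
  induction k with
  | zero => intro U hU hne; obtain ⟨n, hn1, hne'⟩ := hnw U hU hne; exact ⟨n, Nat.zero_le _, hn1, hne'⟩
  | succ k ih =>
    intro U hU hne
    obtain ⟨n, hkn, hn1, z, ⟨y, hyU, rfl⟩, hzU⟩ := ih U hU hne
    set V := U ∩ (⇑f)^[n] ⁻¹' U with hV
    have hVopen : IsOpen V := hU.inter (((f.continuous.iterate n)).isOpen_preimage U hU)
    have hVne : V.Nonempty := ⟨y, hyU, hzU⟩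
    obtain ⟨m, hm1, w, ⟨v, hvV, rfl⟩, hwV⟩ := hnw V hVopen hVne
    refine ⟨n + m, ?_, ?_, ⟨(⇑f)^[n + m] v, ⟨v, hvV.1, rfl⟩, ?_⟩⟩
    · omega
    · omega
    · have := hwV.2
      have : (⇑f)^[n] ((⇑f)^[m] v) ∈ U := this
      rwa [← Function.iterate_add_apply] at this

theorem nonwandering_recurrent_dense {X : Type*} [MetricSpace X] [CompactSpace X]
    (f : X ≃ₜ X)
    (hnw : ∀ U : Set X, IsOpen U → U.Nonempty →
      ∃ n : ℕ, 1 ≤ n ∧ ((⇑f)^[n] '' U ∩ U).Nonempty) :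
    Dense {x : X | ∃ n : ℕ → ℕ, StrictMono n ∧ (∀ k, 1 ≤ n k) ∧
      Tendsto (fun k => (⇑f)^[n k] x) atTop (𝓝 x)} := by
  set A : ℕ → Set X := fun k =>
    ⋃ n : ℕ, ⋃ _ : k + 1 ≤ n, {x : X | dist ((⇑f)^[n] x) x < 1 / (k + 1)} with hA
  have hAopen : ∀ k, IsOpen (A k) := by
    intro k
    refine isOpen_iUnion fun n => isOpen_iUnion fun _ => ?_
    exact isOpen_lt ((f.continuous.iterate n).dist continuous_id) continuous_const
  have hAdense : ∀ k, Dense (A k) := by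
    intro k
    rw [dense_iff_inter_open]
    intro U hU ⟨u, hu⟩
    obtain ⟨r, hr, hball⟩ := Metric.isOpen_iff.1 hU u hu
    set s := min r (1 / (2 * (k + 1))) with hs
    have hspos : 0 < s := lt_min hr (by positivity)
    obtain ⟨n, hkn, hn1, z, ⟨y, hy, rfl⟩, hz⟩ :=
      returns_ge f hnw (k + 1) (ball u s) isOpen_ball ⟨u, mem_ball_self hspos⟩
    refine ⟨y, ?_, ?_⟩
    · exact hball (mem_ball.2 (lt_of_lt_of_le (mem_ball.1 hy) (min_le_left _ _)))
    · refine mem_iUnion.2 ⟨n, mem_iUnion.2 ⟨hkn, ?_⟩⟩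
      have h1 : dist ((⇑f)^[n] y) y ≤ dist ((⇑f)^[n] y) u + dist u y := dist_triangle _ _ _
      have h2 : dist ((⇑f)^[n] y) u < s := mem_ball.1 hz
      have h3 : dist u y < s := by rw [dist_comm]; exact mem_ball.1 hy
      have hs2 : s ≤ 1 / (2 * (k + 1)) := min_le_right _ _
      have : dist ((⇑f)^[n] y) y < 2 * s := by linarith
      have : (2 : ℝ) * s ≤ 1 / (k + 1) := by
        rw [hs] at *
        have : (2 : ℝ) * (1 / (2 * (k + 1))) = 1 / (k + 1) := by
          field_simp
        nlinarith [min_le_right r (1 / (2 * ((k : ℝ) + 1)))]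
      show dist ((⇑f)^[n] y) y < 1 / (k + 1)
      linarith
  have hG : Dense (⋂ k, A k) := dense_iInter_of_isOpen hAopen hAdense
  refine hG.mono ?_
  intro x hx
  simp only [mem_iInter] at hx
  -- for each k, choose m k ≥ k+1 with dist (f^[m k] x) x < 1/(k+1)
  have hm : ∀ k : ℕ, ∃ m : ℕ, k + 1 ≤ m ∧ dist ((⇑f)^[m] x) x < 1 / (k + 1) := by
    intro k
    have := hx k
    simp only [hA, mem_iUnion, mem_setOf_eq] at this
    obtain ⟨n, hn, hlt⟩ := this
    exact ⟨n, hn, hlt⟩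
  choose m hm1 hm2 using hm
  -- build strictly increasing sequence
  set n : ℕ → ℕ := fun k => Nat.rec (m 0) (fun _ prev => m prev) k with hn
  have hn0 : n 0 = m 0 := rfl
  have hnsucc : ∀ k, n (k + 1) = m (n k) := fun k => rfl
  have hnge : ∀ k, k + 1 ≤ n k := by
    intro k
    induction k with
    | zero => simpa [hn0] using hm1 0
    | succ k ih =>
      rw [hnsucc]
      calc k + 2 ≤ n k + 1 := by omega
        _ ≤ m (n k) := hm1 (n k)
  have hmono : StrictMono n := by
    apply strictMono_nat_of_lt_succ
    intro k
    rw [hnsucc]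
    have := hm1 (n k)
    omega
  have hdist : ∀ k, dist ((⇑f)^[n k] x) x < 1 / (k + 1) := by
    intro k
    cases k with
    | zero => simpa [hn0] using hm2 0
    | succ k =>
      rw [hnsucc]
      have h := hm2 (n k)
      have hnk : ((k : ℝ) + 1) ≤ n k := by exact_mod_cast hnge k
      have hle : (1 : ℝ) / (n k + 1) ≤ 1 / ((k + 1 : ℕ) + 1) := by
        apply one_div_le_one_div_of_le (by positivity)
        push_cast
        linarith
      calc dist ((⇑f)^[m (n k)] x) x < 1 / (n k + 1) := h
        _ ≤ 1 / ((k + 1 : ℕ) + 1) := hle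
  refine ⟨n, hmono, fun k => le_trans (by omega) (hnge k), ?_⟩
  rw [Metric.tendsto_atTop]
  intro ε hε
  obtain ⟨N, hN⟩ := exists_nat_one_div_lt hε
  refine ⟨N, fun k hk => ?_⟩
  calc dist ((⇑f)^[n k] x) x < 1 / (k + 1) := hdist k
    _ ≤ 1 / (N + 1) := by
        apply one_div_le_one_div_of_le (by positivity)
        exact_mod_cast Nat.succ_le_succ hk
    _ < ε := hN
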